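/- Let B = {λ_{l+1}, …, λ_{n−1}} be nonnegative reals with σ₁(B) > 0. For each j, set c_j = (σ₁(B|j)² − σ₂(B|j))/σ₁(B)². Then Σ_{j∈B} c_j λ_j ≤ σ₁(B), and each c_j satisfies 0 ≤ c_j ≤ 1. -/

import Mathlib

open scoped BigOperators

/-- `k`-th elementary symmetric function of the values of `f` on `s`. -/
noncomputable def esymm {ι : Type*} [DecidableEq ι] (s : Finset ι) (k : ℕ) (f : ι → ℝ) : ℝ :=
  ∑ t ∈ s.powersetCard k, ∏ i ∈ t, f i

lemma esymm_one {ι : Type*} [DecidableEq ι] (s : Finset ι) (f : ι → ℝ) :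
    esymm s 1 f = ∑ i ∈ s, f i := by
  rw [esymm, Finset.powersetCard_one, Finset.sum_map]
  simp

lemma esymm_nonneg {ι : Type*} [DecidableEq ι] (s : Finset ι) (k : ℕ) (f : ι → ℝ)
    (hf : ∀ i, 0 ≤ f i) : 0 ≤ esymm s k f := by
  apply Finset.sum_nonneg
  intro t _
  exact Finset.prod_nonneg fun i _ => hf i

lemma esymm_two_insert {ι : Type*} [DecidableEq ι] {a : ι} {s : Finset ι} (h : a ∉ s)
    (f : ι → ℝ) :
    esymm (insert a s) 2 f = esymm s 2 f + f a * ∑ i ∈ s, f i := by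
  rw [esymm, show (2:ℕ) = Nat.succ 1 from rfl, Finset.powersetCard_succ_insert h,
    Finset.sum_union, Finset.sum_image]
  · rw [esymm]
    congr 1
    rw [Finset.powersetCard_one, Finset.sum_map, Finset.mul_sum]
    apply Finset.sum_congr rfl
    intro i hi
    have hai : a ≠ i := fun he => h (he ▸ hi)
    simp [Finset.prod_insert, hai]
  · intro t ht u hu hieq
    rw [Finset.mem_coe, Finset.mem_powersetCard] at ht hu
    have ha : a ∉ t := fun hm => h (ht.1 hm)
    have hb : a ∉ u := fun hm => h (hu.1 hm)
    have := congrArg (fun t => Finset.erase t a) hieq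
    simpa [Finset.erase_insert ha, Finset.erase_insert hb] using this
  · rw [Finset.disjoint_right]
    intro t ht hts
    rw [Finset.mem_image] at ht
    obtain ⟨u, hu, rfl⟩ := ht
    rw [Finset.mem_powersetCard] at hts hu
    exact h (hts.1 (Finset.mem_insert_self a u))

lemma sq_sum_eq {ι : Type*} [DecidableEq ι] (s : Finset ι) (f : ι → ℝ) :
    (∑ i ∈ s, f i) ^ 2 = (∑ i ∈ s, (f i) ^ 2) + 2 * esymm s 2 f := by
  induction s using Finset.induction_on with
  | empty =>
    have : Finset.powersetCard 2 (∅ : Finset ι) = ∅ := by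
      rw [Finset.powersetCard_eq_empty]; simp
    simp [esymm, this]
  | insert _ _ h ih =>
    rename_i a s
    rw [Finset.sum_insert h, Finset.sum_insert h, esymm_two_insert h, add_sq, ih]
    ring

lemma esymm_two_le_sq {ι : Type*} [DecidableEq ι] (s : Finset ι) (f : ι → ℝ)
    (hf : ∀ i, 0 ≤ f i) : esymm s 2 f ≤ (∑ i ∈ s, f i) ^ 2 := by
  rw [sq_sum_eq]
  have h1 : 0 ≤ ∑ i ∈ s, (f i)^2 := Finset.sum_nonneg fun i _ => sq_nonneg _
  have h2 : 0 ≤ esymm s 2 f := esymm_nonneg s 2 f hf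
  nlinarith

theorem stmt15 {m : ℕ} (lam : Fin m → ℝ) (hlam : ∀ i, 0 ≤ lam i)
    (hσ : 0 < esymm Finset.univ 1 lam)
    (cc : Fin m → ℝ)
    (hcc : ∀ j, cc j =
      ((esymm (Finset.univ.erase j) 1 lam) ^ 2 - esymm (Finset.univ.erase j) 2 lam)
        / (esymm Finset.univ 1 lam) ^ 2) :
    (∑ j, cc j * lam j ≤ esymm Finset.univ 1 lam) ∧
    ∀ j, 0 ≤ cc j ∧ cc j ≤ 1 := by
  set S := esymm Finset.univ 1 lam with hS
  have hSsum : S = ∑ i, lam i := esymm_one _ _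
  have hS2 : (0:ℝ) < S ^ 2 := pow_pos hσ 2
  have key : ∀ j : Fin m, 0 ≤ cc j ∧ cc j ≤ 1 := by
    intro j
    have he1 : esymm (Finset.univ.erase j) 1 lam = ∑ i ∈ Finset.univ.erase j, lam i :=
      esymm_one _ _
    have hle : esymm (Finset.univ.erase j) 2 lam ≤ (esymm (Finset.univ.erase j) 1 lam) ^ 2 := by
      rw [he1]; exact esymm_two_le_sq _ _ hlam
    have hnn : 0 ≤ esymm (Finset.univ.erase j) 2 lam := esymm_nonneg _ _ _ hlam
    have hsub : ∑ i ∈ Finset.univ.erase j, lam i ≤ S := by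
      rw [hSsum]
      exact Finset.sum_le_sum_of_subset_of_nonneg (Finset.erase_subset _ _)
        (fun i _ _ => hlam i)
    have hsubnn : 0 ≤ ∑ i ∈ Finset.univ.erase j, lam i :=
      Finset.sum_nonneg fun i _ => hlam i
    constructor
    · rw [hcc j]
      apply div_nonneg _ (le_of_lt hS2)
      linarith
    · rw [hcc j, div_le_one hS2]
      have : (esymm (Finset.univ.erase j) 1 lam) ^ 2 ≤ S ^ 2 := by
        rw [he1]; exact pow_le_pow_left₀ hsubnn hsub 2
      linarith
  refine ⟨?_, key⟩
  calc ∑ j, cc j * lam j ≤ ∑ j, lam j := by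
        apply Finset.sum_le_sum
        intro j _
        have := key j
        nlinarith [hlam j]
    _ = S := hSsum.symm
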